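/- Let q = p^m with p an odd prime, and suppose a ∈ C_i^{(N_1,q)} where N_1 = gcd(N, (q−1)/(p−1)) and D = {θ^i : 0 ≤ i < n_2} with θ = α^N, n_2 = lcm(N,(q−1)/(p−1))/N. Then the Hamming weight of the codeword c(a) = (Tr(a θ^j))_{0≤j<n_2} equals q/(p N_1) − (1/p)(η_i^{(N_1,q)} + 1/N_1). -/

import Mathlib

open scoped Classical

/-- The canonical additive character `ψ(x) = ζ_p^{Tr(x)}` of `F_q`. -/
noncomputable def psi (p : ℕ) {F : Type} [Field F] [Fintype F] [Algebra (ZMod p) F]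
    (x : F) : ℂ :=
  Complex.exp (2 * Real.pi * Complex.I * ((Algebra.trace (ZMod p) F x).val : ℂ) / p)

/-- The `i`-th cyclotomic class `C_i^{(e,q)} = α^i ⟨α^e⟩` of order `e` in `F_q`. -/
noncomputable def cyc {F : Type} [Field F] [Fintype F] (α : F) (e i : ℕ) : Finset F :=
  (Finset.range ((Fintype.card F - 1) / e)).image (fun j => α ^ i * (α ^ e) ^ j)

/-- The Gauss period `η_i^{(e,q)} = Σ_{x ∈ C_i^{(e,q)}} ψ(x)`. -/
noncomputable def gp (p : ℕ) {F : Type} [Field F] [Fintype F] [Algebra (ZMod p) F]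
    (α : F) (e i : ℕ) : ℂ :=
  ∑ x ∈ cyc α e i, psi p x

lemma sum_zmod_exp (p : ℕ) [Fact p.Prime] :
    ∑ z : ZMod p, Complex.exp (2 * Real.pi * Complex.I * ((z.val : ℕ) : ℂ) / p) = 0 := by
  have hp : 1 < p := (Fact.out : p.Prime).one_lt
  have hprim := Complex.isPrimitiveRoot_exp p (by omega)
  have hz := hprim.geom_sum_eq_zero hp
  rw [← hz]
  rw [show (Finset.range p) = Finset.univ.image (ZMod.val (n := p)) from ?_]
  · rw [Finset.sum_image (by intro x _ y _ h; exact ZMod.val_injective p h)]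
    refine Finset.sum_congr rfl fun z _ => ?_
    rw [← Complex.exp_nat_mul]
    ring_nf
  · apply Finset.eq_of_subset_of_card_le
    · intro k hk
      simp only [Finset.mem_image, Finset.mem_univ]
      exact ⟨(k : ZMod p), by simp [ZMod.val_cast_of_lt (Finset.mem_range.mp hk)]⟩
    · rw [Finset.card_image_of_injective _ (ZMod.val_injective p)]
      simp [ZMod.card]

lemma char_sum (p : ℕ) [Fact p.Prime] {F : Type} [Field F] [Fintype F] [Algebra (ZMod p) F]
    (x : F) :
    ∑ y : ZMod p, psi p (algebraMap (ZMod p) F y * x)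
      = if Algebra.trace (ZMod p) F x = 0 then (p : ℂ) else 0 := by
  have htr : ∀ y : ZMod p, Algebra.trace (ZMod p) F (algebraMap (ZMod p) F y * x)
      = y * Algebra.trace (ZMod p) F x := by
    intro y
    rw [← Algebra.smul_def, map_smul, smul_eq_mul]
  simp only [psi, htr]
  by_cases h : Algebra.trace (ZMod p) F x = 0
  · simp [h, ZMod.val_zero, ZMod.card]
  · rw [if_neg h]
    rw [← sum_zmod_exp p]
    exact Fintype.sum_equiv (Equiv.mulRight₀ _ h) _ _ (fun y => rfl)

lemma exists_pow_eq {F : Type} [Field F] [Fintype F] (α : F)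
    (hα : orderOf α = Fintype.card F - 1) (x : F) (hx : x ≠ 0) : ∃ k, α ^ k = x := by
  have h1 : 1 < Fintype.card F := Fintype.one_lt_card
  have hα0 : α ≠ 0 := by
    intro h
    rw [h] at hα
    have : orderOf (0:F) = 0 := by
      simp [orderOf_eq_zero_iff']
    omega
  have himg : (Finset.range (Fintype.card F - 1)).image (α ^ ·) = Finset.univ.filter (· ≠ 0) := by
    apply Finset.eq_of_subset_of_card_le
    · intro z hz
      simp only [Finset.mem_image, Finset.mem_range] at hz
      obtain ⟨k, _, rfl⟩ := hz
      simp [pow_ne_zero, hα0]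
    · rw [Finset.card_image_of_injOn, Finset.card_range]
      · rw [Finset.filter_ne']
        simp [Finset.card_erase_of_mem]
      · intro u hu v hv huv
        exact pow_injOn_Iio_orderOf (by simpa [hα] using Finset.mem_range.mp (Finset.mem_coe.mp hu))
          (by simpa [hα] using Finset.mem_range.mp (Finset.mem_coe.mp hv)) huv
  have : x ∈ Finset.univ.filter (· ≠ 0) := by simp [hx]
  rw [← himg] at this
  simp only [Finset.mem_image, Finset.mem_range] at this
  obtain ⟨k, _, hk⟩ := this
  exact ⟨k, hk⟩

lemma mul_dvd_mul_cancel {a b c : ℕ} (hc : 0 < c) (h : a * c ∣ b * c) : a ∣ b := by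
  obtain ⟨k, hk⟩ := h
  exact ⟨k, Nat.eq_of_mul_eq_mul_right hc (by rw [hk]; ring)⟩

/-- The Hamming weight of the codeword `c(a) = (Tr(a θ^j))_{0 ≤ j < n₂}`, for
`a ∈ C_i^{(N₁,q)}`, equals `q/(pN₁) - (1/p)(η_i^{(N₁,q)} + 1/N₁)`. -/
theorem stmt10 (p m N : ℕ) [Fact p.Prime] (hp : Odd p)
    (F : Type) [Field F] [Fintype F] [Algebra (ZMod p) F]
    (hq : Fintype.card F = p ^ m)
    (α : F) (hα : orderOf α = p ^ m - 1)
    (hN : N ∣ p ^ m - 1) (hN0 : 0 < N)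
    (N₁ N₂ n₂ : ℕ)
    (hN₁ : N₁ = Nat.gcd N ((p ^ m - 1) / (p - 1)))
    (hN₂ : N₂ = Nat.lcm N ((p ^ m - 1) / (p - 1)))
    (hn₂ : n₂ = N₂ / N)
    (i : ℕ) (hi : i < N₁) (a : F) (ha : a ∈ cyc α N₁ i) :
    (((Finset.range n₂).filter
        (fun j => Algebra.trace (ZMod p) F (a * (α ^ N) ^ j) ≠ 0)).card : ℂ)
      = (p : ℂ) ^ m / (p * N₁) - (1 / p) * (gp p α N₁ i + 1 / N₁) := by
  have hp1 : 1 < p := (Fact.out : p.Prime).one_lt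
  have hcard : 1 < Fintype.card F := Fintype.one_lt_card
  have hq1 : 1 < p ^ m := hq ▸ hcard
  set Q := p ^ m - 1 with hQdef
  have hQ0 : 0 < Q := by omega
  have hα' : orderOf α = Fintype.card F - 1 := by rw [hα, hq]
  have hα0 : α ≠ 0 := by
    intro h
    rw [h] at hα
    have : orderOf (0:F) = 0 := by
      simp [orderOf_eq_zero_iff']
    omega
  -- arithmetic setup
  set s := (p ^ m - 1) / (p - 1) with hs_def
  have hpd : (p - 1) ∣ (p ^ m - 1) := by simpa using Nat.sub_dvd_pow_sub_pow p 1 m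
  have hs : s * (p - 1) = Q := Nat.div_mul_cancel hpd
  have hgl : N₂ * N₁ = N * s := by rw [hN₂, hN₁, mul_comm, Nat.gcd_mul_lcm]
  have hNN₂ : n₂ * N = N₂ := by rw [hn₂]; exact Nat.div_mul_cancel (hN₂ ▸ Nat.dvd_lcm_left N s)
  have hn₂N₁ : n₂ * N₁ = s := by
    have h := hgl
    rw [← hNN₂] at h
    exact Nat.eq_of_mul_eq_mul_left hN0 (by linarith [h])
  have key : n₂ * N₁ * (p - 1) = Q := by rw [hn₂N₁, hs]
  have hN₁N : N₁ ∣ N := hN₁ ▸ Nat.gcd_dvd_left N s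
  have hN₁s : N₁ ∣ s := hN₁ ▸ Nat.gcd_dvd_right N s
  have hN₁Q : N₁ ∣ Q := hN₁N.trans hN
  have hN₁0 : 0 < N₁ := by rw [hN₁]; exact Nat.gcd_pos_of_pos_left s hN0
  have hs0 : 0 < s := by
    rcases Nat.eq_zero_or_pos s with h | h
    · rw [h] at hs; omega
    · exact h
  have hn₂0 : 0 < n₂ := by
    rcases Nat.eq_zero_or_pos n₂ with h | h
    · rw [h] at hn₂N₁; omega
    · exact h
  -- β and θ
  set β := α ^ N₁ with hβdef
  set θ := α ^ N with hθdef
  have hβ0 : β ≠ 0 := pow_ne_zero _ hα0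
  have hθ0 : θ ≠ 0 := pow_ne_zero _ hα0
  have hβord : orderOf β = Q / N₁ := by
    rw [hβdef, orderOf_pow' _ (by omega : N₁ ≠ 0), hα, Nat.gcd_eq_right hN₁Q]
  have hθord : orderOf θ = Q / N := by
    rw [hθdef, orderOf_pow' _ (by omega : N ≠ 0), hα, Nat.gcd_eq_right hN]
  have hQN₁ : Q / N₁ = n₂ * (p - 1) := by
    refine Nat.div_eq_of_eq_mul_left hN₁0 ?_
    rw [← key]; ring
  have hβordpos : 0 < orderOf β := by
    rw [hβord, hQN₁]
    exact Nat.mul_pos hn₂0 (by omega)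
  have hQN : Q / N * N = Q := Nat.div_mul_cancel hN
  -- a as a power
  obtain ⟨k, hkmem, hak⟩ := Finset.mem_image.mp ha
  have ha0 : a ≠ 0 := by rw [← hak]; exact mul_ne_zero (pow_ne_zero _ hα0) (pow_ne_zero _ (pow_ne_zero _ hα0))
  -- N', s'
  obtain ⟨N', hN'⟩ := hN₁N
  obtain ⟨s', hs'⟩ := hN₁s
  have hcop : Nat.Coprime n₂ N' := by
    have h1 : n₂ = s / N₁ := by
      refine (Nat.div_eq_of_eq_mul_left hN₁0 ?_).symm; exact hn₂N₁.symm
    have h2 : N' = N / N₁ := by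
      refine (Nat.div_eq_of_eq_mul_left hN₁0 ?_).symm; rw [hN']; ring
    have := Nat.coprime_div_gcd_div_gcd (m := N) (n := s) (hN₁ ▸ hN₁0)
    rw [← hN₁] at this
    rw [h1, h2]
    exact (this).symm
  -- the multiplication map
  set g : ℕ × ZMod p → F := fun jy => algebraMap (ZMod p) F jy.2 * (a * θ ^ jy.1) with hg
  set sfin := (Finset.range n₂) ×ˢ (Finset.univ.erase (0 : ZMod p)) with hsfin
  have halg_inj : Function.Injective (algebraMap (ZMod p) F) := (algebraMap (ZMod p) F).injective
  have hypow : ∀ y : ZMod p, y ≠ 0 → (algebraMap (ZMod p) F y) ^ (p - 1) = 1 := by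
    intro y hy
    rw [← map_pow, ZMod.pow_card_sub_one_eq_one hy, map_one]
  -- maps into cyc
  have hmaps : ∀ jy ∈ sfin, g jy ∈ cyc α N₁ i := by
    rintro ⟨j, y⟩ hjy
    rw [hsfin, Finset.mem_product, Finset.mem_range, Finset.mem_erase] at hjy
    obtain ⟨hj, hy, -⟩ := hjy
    have hyF0 : algebraMap (ZMod p) F y ≠ 0 := fun h => hy (halg_inj (by simpa using h))
    obtain ⟨u, hu⟩ := exists_pow_eq α hα' _ hyF0
    have hupow : α ^ (u * (p - 1)) = 1 := by rw [pow_mul, hu, hypow y hy]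
    obtain ⟨c, hc⟩ : Q ∣ u * (p - 1) := hα ▸ orderOf_dvd_of_pow_eq_one hupow
    have huc : u = s * c := by
      refine Nat.eq_of_mul_eq_mul_right (show 0 < p - 1 by omega) ?_
      rw [hc, ← hs]; ring
    set M := k + N' * j + s' * c with hM
    have hgM : g (j, y) = α ^ i * β ^ M := by
      have hexp : N₁ * M = N₁ * k + N * j + s * c := by
        rw [hM, Nat.mul_add, Nat.mul_add, ← Nat.mul_assoc, ← Nat.mul_assoc, ← hN', ← hs']
      show algebraMap (ZMod p) F y * (a * θ ^ j) = α ^ i * β ^ M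
      rw [← hu, huc, ← hak, hβdef, hθdef]
      simp only [← pow_mul, ← pow_add]
      congr 1
      rw [hexp]
      ring
    rw [hgM]
    refine Finset.mem_image.mpr ⟨M % orderOf β, ?_, ?_⟩
    · rw [Finset.mem_range, hq]
      calc M % orderOf β < orderOf β := Nat.mod_lt _ hβordpos
        _ = Q / N₁ := hβord
    · rw [pow_mod_orderOf]
  -- injectivity
  have hinj : Set.InjOn g sfin := by
    rintro ⟨j, y⟩ hjy ⟨j', y'⟩ hjy' heq
    rw [hsfin, Finset.coe_product] at hjy hjy'
    obtain ⟨hj, hy⟩ := hjy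
    obtain ⟨hj', hy'⟩ := hjy'
    simp only [Finset.coe_range, Set.mem_Iio] at hj hj'
    simp only [Finset.coe_erase, Set.mem_diff, Finset.coe_univ] at hy hy'
    have hy0 : y ≠ 0 := by simpa using hy.2
    have hy0' : y' ≠ 0 := by simpa using hy'.2
    have h1 : algebraMap (ZMod p) F y * θ ^ j = algebraMap (ZMod p) F y' * θ ^ j' := by
      apply mul_right_cancel₀ ha0
      calc algebraMap (ZMod p) F y * θ ^ j * a
          = algebraMap (ZMod p) F y * (a * θ ^ j) := by ring
        _ = algebraMap (ZMod p) F y' * (a * θ ^ j') := heq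
        _ = algebraMap (ZMod p) F y' * θ ^ j' * a := by ring
    have h2 : θ ^ (j * (p - 1)) = θ ^ (j' * (p - 1)) := by
      have := congrArg (· ^ (p - 1)) h1
      simp only [mul_pow, hypow y hy0, hypow y' hy0', one_mul] at this
      rw [pow_mul, pow_mul]
      exact this
    set θu : Fˣ := Units.mk0 θ hθ0 with hθu_def
    have hθu : orderOf θu = Q / N := by rw [← hθord]; exact orderOf_units.symm
    have h2u : θu ^ (j * (p - 1)) = θu ^ (j' * (p - 1)) := by
      apply Units.ext
      simp only [Units.val_pow_eq_pow_val]; exact h2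
    have hmod : j * (p - 1) ≡ j' * (p - 1) [MOD Q / N] := by
      rw [← hθu]; exact pow_eq_pow_iff_modEq.mp h2u
    have hjj' : j = j' := by
      have main : ∀ b b' : ℕ, b < n₂ → b' < n₂ → b ≤ b' →
          b * (p-1) ≡ b' * (p-1) [MOD Q / N] → b = b' := by
        intro b b' hb hb' hle hm
        have hdvd : Q / N ∣ b' * (p - 1) - b * (p - 1) :=
          (Nat.modEq_iff_dvd' (Nat.mul_le_mul_right _ hle)).mp hm
        rw [← Nat.sub_mul] at hdvd
        have hdvd2 : s * (p - 1) ∣ (b' - b) * N * (p - 1) := by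
          rw [hs, ← hQN]
          have := Nat.mul_dvd_mul_right hdvd N
          calc Q / N * N ∣ (b' - b) * (p-1) * N := this
            _ = (b' - b) * N * (p-1) := by ring
        have hdvd3 : s ∣ (b' - b) * N := mul_dvd_mul_cancel (by omega) hdvd2
        have hdvd4 : n₂ ∣ (b' - b) * N' := by
          apply mul_dvd_mul_cancel hN₁0
          calc n₂ * N₁ = s := hn₂N₁
            _ ∣ (b' - b) * N := hdvd3
            _ = (b' - b) * N' * N₁ := by rw [hN']; ring
        have : n₂ ∣ b' - b := hcop.dvd_of_dvd_mul_right hdvd4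
        have := Nat.eq_zero_of_dvd_of_lt this (by omega)
        omega
      rcases le_total j j' with h | h
      · exact main j j' hj hj' h hmod
      · exact (main j' j hj' hj h hmod.symm).symm
    subst hjj'
    have : algebraMap (ZMod p) F y = algebraMap (ZMod p) F y' :=
      mul_right_cancel₀ (pow_ne_zero _ hθ0) h1
    exact Prod.ext rfl (halg_inj this)
  -- cardinality of cyc
  have hcyccard : (cyc α N₁ i).card = n₂ * (p - 1) := by
    rw [cyc, Finset.card_image_of_injOn, Finset.card_range, hq, ← hQdef, hQN₁]
    intro u hu v hv huv
    have hβuv : β ^ u = β ^ v := mul_left_cancel₀ (pow_ne_zero _ hα0) huv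
    simp only [Finset.coe_range, Set.mem_Iio, hq, ← hQdef] at hu hv
    exact pow_injOn_Iio_orderOf (by rw [hβord]; exact hu) (by rw [hβord]; exact hv) hβuv
  have himageg : sfin.image g = cyc α N₁ i := by
    apply Finset.eq_of_subset_of_card_le
    · intro z hz
      obtain ⟨jy, hjy, rfl⟩ := Finset.mem_image.mp hz
      exact hmaps jy hjy
    · rw [Finset.card_image_of_injOn hinj, hcyccard, hsfin, Finset.card_product,
        Finset.card_range, Finset.card_erase_of_mem (Finset.mem_univ _), Finset.card_univ,
        ZMod.card]
  -- the double sum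
  set t : ℕ → ZMod p := fun j => Algebra.trace (ZMod p) F (a * θ ^ j) with ht
  set Zc := ((Finset.range n₂).filter (fun j => t j = 0)).card with hZc
  have hS₀ : ∑ j ∈ Finset.range n₂, ∑ y : ZMod p, psi p (algebraMap (ZMod p) F y * (a * θ ^ j))
      = (p : ℂ) * Zc := by
    rw [Finset.sum_congr rfl (fun j _ => char_sum p (a * θ ^ j))]
    rw [Finset.sum_ite, Finset.sum_const, Finset.sum_const_zero, add_zero, nsmul_eq_mul]
    ring
  have hpsi0 : ∀ x : F, psi p (algebraMap (ZMod p) F (0 : ZMod p) * x) = 1 := by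
    intro x
    simp [psi]
  have hS₁ : ∑ j ∈ Finset.range n₂, ∑ y : ZMod p, psi p (algebraMap (ZMod p) F y * (a * θ ^ j))
      = (n₂ : ℂ) + gp p α N₁ i := by
    have hsplit : ∀ j : ℕ, ∑ y : ZMod p, psi p (algebraMap (ZMod p) F y * (a * θ ^ j))
        = 1 + ∑ y ∈ Finset.univ.erase (0 : ZMod p), psi p (algebraMap (ZMod p) F y * (a * θ ^ j)) := by
      intro j
      rw [← Finset.add_sum_erase _ _ (Finset.mem_univ (0 : ZMod p)), hpsi0]
    rw [Finset.sum_congr rfl (fun j _ => hsplit j), Finset.sum_add_distrib,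
      Finset.sum_const, Finset.card_range, nsmul_eq_mul, mul_one]
    congr 1
    rw [gp, ← himageg, Finset.sum_image (fun x hx y hy hxy => hinj hx hy hxy), hsfin,
      Finset.sum_product]
  have hZeq : (p : ℂ) * Zc = (n₂ : ℂ) + gp p α N₁ i := by rw [← hS₀, hS₁]
  -- weight + zero count = n₂
  set Wc := ((Finset.range n₂).filter (fun j => t j ≠ 0)).card with hWc
  have hWZ : Zc + Wc = n₂ := by
    rw [hZc, hWc, Finset.card_filter_add_card_filter_not, Finset.card_range]
  -- final algebra
  have hkeyC : (n₂ : ℂ) * N₁ * ((p : ℂ) - 1) = (p : ℂ) ^ m - 1 := by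
    have hcast : ((n₂ * N₁ * (p - 1) : ℕ) : ℂ) = ((p ^ m - 1 : ℕ) : ℂ) := by rw [key]
    push_cast [Nat.cast_sub hp1.le, Nat.cast_sub hq1.le] at hcast
    exact hcast
  have hgoal : (Wc : ℂ) = (n₂ : ℂ) - Zc := by
    have h : (Zc : ℂ) + Wc = n₂ := by exact_mod_cast hWZ
    linear_combination h
  have hgp : gp p α N₁ i = (p : ℂ) * Zc - n₂ := by linear_combination -hZeq
  have hpne : (p : ℂ) ≠ 0 := Nat.cast_ne_zero.mpr (by omega)
  have hN₁ne : (N₁ : ℂ) ≠ 0 := Nat.cast_ne_zero.mpr (by omega)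
  show (Wc : ℂ) = _
  rw [hgoal, hgp]
  field_simp
  ring_nf
  linear_combination hkeyC
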